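/- Let f : ℕ → ℝ be defined on positive integers by f(n) = (1/2)·(k - 1 + n/2^k) where k = ⌊log₂ n⌋. Then for every a ≥ 1, all positive integers n₁, …, n_a with n = n₁ + ⋯ + n_a, and every probability vector (p₁, …, p_a) (nonnegative reals summing to 1), f(n) ≥ 1 - max_i p_i + Σ_i p_i · f(n_i). -/

import Mathlib

noncomputable def perfectLoss (n : ℕ) : ℝ :=
  ((Nat.log 2 n : ℝ) - 1 + (n : ℝ) / 2 ^ (Nat.log 2 n)) / 2

lemma pl_bounds (n : ℕ) (hn : 1 ≤ n) :
    (2:ℝ) ^ (Nat.log 2 n) ≤ n ∧ (n:ℝ) < 2 ^ (Nat.log 2 n + 1) := by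
  constructor
  · exact_mod_cast Nat.pow_log_le_self 2 (by omega)
  · exact_mod_cast Nat.lt_pow_succ_log_self (by norm_num) n

lemma pl_mono {m n : ℕ} (hm : 1 ≤ m) (h : m ≤ n) : perfectLoss m ≤ perfectLoss n := by
  have hn : 1 ≤ n := le_trans hm h
  obtain ⟨hm1, hm2⟩ := pl_bounds m hm
  obtain ⟨hn1, hn2⟩ := pl_bounds n hn
  unfold perfectLoss
  set j := Nat.log 2 m with hj
  set k := Nat.log 2 n with hk
  have hjk : j ≤ k := Nat.log_mono_right h
  have hPj : (0:ℝ) < 2 ^ j := by positivity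
  have hPk : (0:ℝ) < 2 ^ k := by positivity
  rcases eq_or_lt_of_le hjk with he | hlt
  · rw [he]
    gcongr
  · have h1 : (m:ℝ) / 2 ^ j < 2 := by
      rw [div_lt_iff₀ hPj]
      calc (m:ℝ) < 2 ^ (j+1) := hm2
      _ = 2 * 2 ^ j := by ring
    have h2 : (1:ℝ) ≤ (n:ℝ) / 2 ^ k := by
      rw [le_div_iff₀ hPk]; linarith
    have h3 : (j:ℝ) + 1 ≤ (k:ℝ) := by exact_mod_cast hlt
    linarith

lemma arith (j d s : ℕ) (m n : ℝ)
    (hss : s = j + d ∨ s = j + d + 1)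
    (hm1 : (2:ℝ)^j ≤ m) (hm2 : m < 2^(j+1))
    (hn1 : (2:ℝ)^(j+d) ≤ n) (hn2 : n < 2^(j+d+1)) :
    ((s:ℝ) - 1 + (m+n)/2^s)/2 ≥
      1/2 + (((j:ℝ) - 1 + m/2^j)/2 + (((j:ℝ)+(d:ℝ)) - 1 + n/2^(j+d))/2)/2 := by
  have hP : (0:ℝ) < 2^j := by positivity
  have hD : (0:ℝ) < 2^d := by positivity
  have hPD : (2:ℝ)^(j+d) = 2^j * 2^d := pow_add 2 j d
  set X := m / 2^j with hX
  set Y := n / 2^(j+d) with hY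
  have hX1 : 1 ≤ X := (le_div_iff₀ hP).2 (by linarith)
  have hX2 : X < 2 := (div_lt_iff₀ hP).2 (by
    have : (2:ℝ)^(j+1) = 2 * 2^j := by ring
    linarith)
  have hY1 : 1 ≤ Y := (le_div_iff₀ (by positivity)).2 (by linarith)
  have hsplit : (m+n)/2^(j+d) = X/2^d + Y := by
    rw [hX, hY, hPD, div_div, ← add_div]
  have hW : 0 ≤ X / 2^d := by positivity
  rcases hss with rfl | rfl
  · -- s = j + d
    push_cast
    rw [hsplit]
    rcases (by omega : d = 0 ∨ d = 1 ∨ d = 2 ∨ 3 ≤ d) with rfl | rfl | rfl | hd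
    · norm_num; linarith
    · norm_num; linarith
    · norm_num; linarith
    · have hd3 : (3:ℝ) ≤ (d:ℝ) := by exact_mod_cast hd
      linarith
  · -- s = j + d + 1
    have h2 : (2:ℝ)^(j+d+1) = 2^(j+d) * 2 := by ring
    have hsplit2 : (m+n)/2^(j+d+1) = (X/2^d + Y)/2 := by
      rw [h2, ← div_div, hsplit]
    push_cast
    rw [hsplit2]
    rcases (by omega : d = 0 ∨ d = 1 ∨ 2 ≤ d) with rfl | rfl | hd
    · norm_num; linarith
    · norm_num; linarith
    · have hd2 : (2:ℝ) ≤ (d:ℝ) := by exact_mod_cast hd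
      linarith

lemma binsplit_le {m n : ℕ} (hm : 1 ≤ m) (hn : 1 ≤ n) (hmn : m ≤ n) :
    perfectLoss (m + n) ≥ 1/2 + (perfectLoss m + perfectLoss n)/2 := by
  obtain ⟨hm1, hm2⟩ := pl_bounds m hm
  obtain ⟨hn1, hn2⟩ := pl_bounds n hn
  set j := Nat.log 2 m with hj
  set k := Nat.log 2 n with hk
  set s := Nat.log 2 (m+n) with hs
  have hjk : j ≤ k := Nat.log_mono_right hmn
  have hks : k ≤ s := Nat.log_mono_right (Nat.le_add_left n m)
  have hsk : s ≤ k + 1 := by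
    have h1 : m + n < 2^(k+2) := by
      have h2 : n < 2^(k+1) := hk ▸ Nat.lt_pow_succ_log_self (by norm_num) n
      have h3 : 2^(k+2) = 2*2^(k+1) := by ring
      omega
    have := Nat.log_lt_of_lt_pow (b := 2) (by omega : m + n ≠ 0) h1
    omega
  clear_value j k s
  obtain ⟨d, rfl⟩ : ∃ d, k = j + d := ⟨k - j, by omega⟩
  have key := arith j d s (m:ℝ) (n:ℝ) (by omega) hm1 hm2 hn1 hn2
  unfold perfectLoss
  rw [← hj, ← hk, ← hs]
  push_cast
  push_cast at key
  linarith

lemma binsplit {m n : ℕ} (hm : 1 ≤ m) (hn : 1 ≤ n) :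
    perfectLoss (m + n) ≥ 1/2 + (perfectLoss m + perfectLoss n)/2 := by
  rcases le_total m n with h | h
  · exact binsplit_le hm hn h
  · have := binsplit_le hn hm h
    rw [Nat.add_comm n m] at this
    linarith

lemma pair {m₁ m₂ : ℕ} (h1 : 1 ≤ m₁) (h2 : 1 ≤ m₂) (q₁ q₂ : ℝ) (hq1 : 0 ≤ q₁) (hq2 : 0 ≤ q₂) :
    (q₁ + q₂) * perfectLoss (m₁ + m₂) ≥
      q₁ + q₂ - max q₁ q₂ + q₁ * perfectLoss m₁ + q₂ * perfectLoss m₂ := by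
  have hB := binsplit h1 h2
  have hmono1 : perfectLoss m₁ ≤ perfectLoss (m₁ + m₂) := pl_mono h1 (by omega)
  have hmono2 : perfectLoss m₂ ≤ perfectLoss (m₁ + m₂) := pl_mono h2 (by omega)
  rcases le_total q₁ q₂ with h | h
  · rw [max_eq_right h]
    nlinarith [mul_le_mul_of_nonneg_left hmono2 (sub_nonneg.2 h),
      mul_le_mul_of_nonneg_left hB hq1]
  · rw [max_eq_left h]
    nlinarith [mul_le_mul_of_nonneg_left hmono1 (sub_nonneg.2 h),
      mul_le_mul_of_nonneg_left hB hq2]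

lemma key {a : ℕ} (n : Fin a → ℕ) (hn : ∀ i, 1 ≤ n i) (p : Fin a → ℝ) (hp : ∀ i, 0 ≤ p i)
    (s : Finset (Fin a)) (hs : s.Nonempty) :
    (∑ i ∈ s, p i) * perfectLoss (∑ i ∈ s, n i) ≥
      (∑ i ∈ s, p i) - s.sup' hs p + ∑ i ∈ s, p i * perfectLoss (n i) := by
  induction hs using Finset.Nonempty.cons_induction with
  | singleton i => simp
  | cons i s hi hs ih =>
    rw [Finset.sum_cons, Finset.sum_cons, Finset.sum_cons, Finset.sup'_cons hs]
    have hS0 : 0 ≤ ∑ j ∈ s, p j := Finset.sum_nonneg fun j _ => hp j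
    have hN1 : 1 ≤ ∑ j ∈ s, n j := by
      obtain ⟨j, hj⟩ := hs
      calc 1 ≤ n j := hn j
      _ ≤ ∑ j ∈ s, n j := Finset.single_le_sum (f := n) (fun _ _ => Nat.zero_le _) hj
    have hsup : s.sup' hs p ≤ ∑ j ∈ s, p j := by
      apply Finset.sup'_le
      intro j hj
      exact Finset.single_le_sum (fun i _ => hp i) hj
    have hpair := pair (hn i) hN1 (p i) (∑ j ∈ s, p j) (hp i) hS0
    have hmax : max (p i) (∑ j ∈ s, p j) + s.sup' hs p ≤ max (p i) (s.sup' hs p) + ∑ j ∈ s, p j := by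
      rcases le_total (p i) (∑ j ∈ s, p j) with h | h
      · rw [max_eq_right h]
        linarith [le_max_right (p i) (s.sup' hs p)]
      · rw [max_eq_left h]
        linarith [le_max_left (p i) (s.sup' hs p)]
    have : max (p i) (s.sup' hs p) = p i ⊔ s.sup' hs p := rfl
    linarith [hpair, ih]

theorem stmt_2 (a : ℕ) (ha : 1 ≤ a) (n : Fin a → ℕ) (hn : ∀ i, 1 ≤ n i)
    (p : Fin a → ℝ) (hp : ∀ i, 0 ≤ p i) (hps : ∑ i, p i = 1) :
    perfectLoss (∑ i, n i) ≥
      1 - Finset.univ.sup' ⟨⟨0, ha⟩, Finset.mem_univ _⟩ p + ∑ i, p i * perfectLoss (n i) := by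
  have h := key n hn p hp Finset.univ ⟨⟨0, ha⟩, Finset.mem_univ _⟩
  rw [hps] at h
  linarith
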